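/- arXiv:1401.2666 — 4 statements merged into one kernel-verified Lean document; each statement's English description precedes it below -/
import Mathlib

section
/- Let N ≥ 3 and let u : closure(B₁⁺) → ℝ be a positive C¹ function on the closed upper half-ball of radius 1 in ℝ^N. Define g(r,θ) = r^((N-2)/2) u(rθ) for r ∈ (0,1] and θ in the closed upper half unit sphere. Then there exists r₀ ∈ (0,1] such that ∂g/∂r (r,θ) > 0 for all 0 < r ≤ r₀ and all θ; in particular, for every λ ∈ (0, r₀] and every y in the closed half-ball of radius r₀ with |y| > λ, one has u(y) > (λ/|y|)^(N-2) u(λ² y / |y|²). -/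
open Real Filter
open scoped BigOperators RealInnerProductSpace

noncomputable section

/-- `N`-dimensional Euclidean space. -/
abbrev E (N : ℕ) := EuclideanSpace ℝ (Fin N)

/-- The last coordinate index of `Fin N`. -/
def lastIdx (N : ℕ) (h : 0 < N) : Fin N := ⟨N - 1, Nat.sub_lt h Nat.one_pos⟩

/-- Partial derivative of `u` in the `i`-th coordinate direction. -/
def pd {N : ℕ} (u : E N → ℝ) (i : Fin N) (y : E N) : ℝ :=
  fderiv ℝ u y (EuclideanSpace.single i 1)

/-- The Laplacian of `u`. -/
def lap {N : ℕ} (u : E N → ℝ) (y : E N) : ℝ := ∑ i, pd (pd u i) i y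

set_option maxHeartbeats 1000000 in
/-- the moving sphere process can start: for a positive `C¹` function `u` on
the closed upper half unit ball, `g(r,θ) = r^((N-2)/2) u(rθ)` is strictly increasing in `r`
for `r ≤ r₀`, and consequently `u(y) > (λ/|y|)^(N-2) u(λ² y/|y|²)` for `λ < |y| ≤ r₀`. -/
theorem stmt0 (N : ℕ) (hN : 3 ≤ N) (u : E N → ℝ)
    (hreg : ContDiffOn ℝ 1 u {y : E N | ‖y‖ ≤ 1 ∧ 0 ≤ y (lastIdx N (by omega))})
    (hpos : ∀ y : E N, ‖y‖ ≤ 1 → 0 ≤ y (lastIdx N (by omega)) → 0 < u y) :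
    ∃ r₀ : ℝ, 0 < r₀ ∧ r₀ ≤ 1 ∧
      (∀ r : ℝ, 0 < r → r ≤ r₀ → ∀ θ : E N, ‖θ‖ = 1 → 0 ≤ θ (lastIdx N (by omega)) →
        0 < deriv (fun s : ℝ => s ^ (((N : ℝ) - 2) / 2) * u (s • θ)) r) ∧
      (∀ lam : ℝ, 0 < lam → lam ≤ r₀ → ∀ y : E N, ‖y‖ ≤ r₀ → 0 ≤ y (lastIdx N (by omega)) →
        lam < ‖y‖ →
        (lam / ‖y‖) ^ (N - 2) * u ((lam ^ 2 / ‖y‖ ^ 2) • y) < u y) := by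
  have hN0 : 0 < N := by omega
  set i : Fin N := lastIdx N hN0 with hidef
  set α : ℝ := ((N : ℝ) - 2) / 2 with hαdef
  have hα : 0 < α := by
    have : (3 : ℝ) ≤ (N : ℝ) := by exact_mod_cast hN
    rw [hαdef]; linarith
  set S : Set (E N) := {y : E N | ‖y‖ ≤ 1 ∧ 0 ≤ y i} with hSdef
  have hreg' : ContDiffOn ℝ 1 u S := hreg
  have hevalc : Continuous fun y : E N => y i := by
    exact (continuous_apply i).comp (PiLp.continuous_ofLp 2 fun _ : Fin N => ℝ)
  have hSclosed : IsClosed S := by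
    apply IsClosed.inter
    · exact isClosed_le continuous_norm continuous_const
    · exact isClosed_le continuous_const hevalc
  have hScompact : IsCompact S :=
    (isCompact_closedBall (0 : E N) 1).of_isClosed_subset hSclosed
      (fun y hy => mem_closedBall_zero_iff.2 hy.1)
  have hSconvex : Convex ℝ S := by
    have h1 : Convex ℝ {y : E N | ‖y‖ ≤ 1} := by
      have := convex_closedBall (0 : E N) 1
      convert this using 1
      all_goals ext y; simp [mem_closedBall_zero_iff]
    have hlin : IsLinearMap ℝ fun y : E N => y i := ⟨fun a b => rfl, fun c a => rfl⟩
    exact h1.inter (convex_halfSpace_ge hlin 0)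
  have hSuniq : UniqueDiffOn ℝ S := by
    apply uniqueDiffOn_convex hSconvex
    refine ⟨EuclideanSpace.single i (1/2 : ℝ), ?_⟩
    have hopen : IsOpen {y : E N | ‖y‖ < 1 ∧ 0 < y i} :=
      (isOpen_lt continuous_norm continuous_const).inter (isOpen_lt continuous_const hevalc)
    have hsub : {y : E N | ‖y‖ < 1 ∧ 0 < y i} ⊆ S := fun y hy => ⟨hy.1.le, hy.2.le⟩
    apply interior_maximal hsub hopen
    refine ⟨?_, ?_⟩
    · rw [EuclideanSpace.norm_single]; norm_num
    · rw [EuclideanSpace.single_apply]; norm_num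
  have hSne : (0 : E N) ∈ S := ⟨by simp, by simp⟩
  obtain ⟨z0, hz0S, hz0min⟩ := hScompact.exists_isMinOn ⟨0, hSne⟩ hreg'.continuousOn
  set m : ℝ := u z0 with hmdef
  have hm : 0 < m := hpos z0 hz0S.1 hz0S.2
  have hfc : ContinuousOn (fun y => ‖fderivWithin ℝ u S y‖) S :=
    (hreg'.continuousOn_fderivWithin hSuniq le_rfl).norm
  obtain ⟨z1, hz1S, hz1max⟩ := hScompact.exists_isMaxOn ⟨0, hSne⟩ hfc
  set M : ℝ := ‖fderivWithin ℝ u S z1‖ with hMdef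
  have hM0 : 0 ≤ M := norm_nonneg _
  set r₀ : ℝ := min (1/2) (α * m / (2 * (M + 1))) with hr₀def
  have hr₀pos : 0 < r₀ := by
    apply lt_min (by norm_num)
    positivity
  have hr₀half : r₀ ≤ 1/2 := min_le_left _ _
  have hr₀1 : r₀ ≤ 1 := hr₀half.trans (by norm_num)
  -- key: derivative positivity
  have key : ∀ r : ℝ, 0 < r → r ≤ r₀ → ∀ θ : E N, ‖θ‖ = 1 → 0 ≤ θ i →
      0 < deriv (fun s : ℝ => s ^ α * u (s • θ)) r := by
    intro r hr hrr θ hθ hθi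
    have hr1 : r < 1 := lt_of_le_of_lt (hrr.trans hr₀half) (by norm_num)
    have hmem : ∀ s ∈ Set.Ioo (0:ℝ) 1, s • θ ∈ S := by
      intro s hs
      constructor
      · rw [norm_smul, hθ, mul_one, Real.norm_eq_abs, abs_of_pos hs.1]
        exact hs.2.le
      · have : (s • θ) i = s * θ i := rfl
        rw [this]
        exact mul_nonneg hs.1.le hθi
    have hx : r • θ ∈ S := hmem r ⟨hr, hr1⟩
    set D : ℝ := fderivWithin ℝ u S (r • θ) θ with hDdef
    have hDu : HasFDerivWithinAt u (fderivWithin ℝ u S (r • θ)) S (r • θ) :=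
      (hreg'.differentiableOn one_ne_zero (r • θ) hx).hasFDerivWithinAt
    have hin : HasDerivWithinAt (fun s : ℝ => s • θ) θ (Set.Ioo 0 1) r := by
      have := (hasDerivAt_id r).smul_const θ
      simpa using this.hasDerivWithinAt
    have hcomp : HasDerivWithinAt (fun s : ℝ => u (s • θ)) D (Set.Ioo 0 1) r := by
      have := hDu.comp_hasDerivWithinAt r hin (fun s hs => hmem s hs)
      exact this
    have hcomp' : HasDerivAt (fun s : ℝ => u (s • θ)) D r :=
      hcomp.hasDerivAt (Ioo_mem_nhds hr hr1)
    have hrpow : HasDerivAt (fun s : ℝ => s ^ α) (α * r ^ (α - 1)) r :=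
      Real.hasDerivAt_rpow_const (Or.inl hr.ne')
    have hprod : HasDerivAt (fun s : ℝ => s ^ α * u (s • θ)) _ r := hrpow.mul hcomp'
    rw [hprod.deriv]
    have hDle : |D| ≤ M := by
      have h1 : |D| ≤ ‖fderivWithin ℝ u S (r • θ)‖ := by
        calc |D| = ‖fderivWithin ℝ u S (r • θ) θ‖ := rfl
          _ ≤ ‖fderivWithin ℝ u S (r • θ)‖ * ‖θ‖ := (fderivWithin ℝ u S (r • θ)).le_opNorm θ
          _ = ‖fderivWithin ℝ u S (r • θ)‖ := by rw [hθ, mul_one]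
      exact h1.trans (hz1max hx)
    have hum : m ≤ u (r • θ) := hz0min hx
    have hrb : r * (2 * (M + 1)) ≤ α * m := by
      have := hrr.trans (min_le_right _ _)
      rwa [le_div_iff₀ (by positivity)] at this
    have hsum : 0 < α * u (r • θ) + r * D := by
      have hD1 : -M ≤ D := neg_le_of_abs_le hDle
      have h2 : r * (-M) ≤ r * D := mul_le_mul_of_nonneg_left hD1 hr.le
      have h3 : α * m ≤ α * u (r • θ) := mul_le_mul_of_nonneg_left hum hα.le
      nlinarith
    have hP : 0 < r ^ (α - 1) := Real.rpow_pos_of_pos hr _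
    have hsplit : r ^ α = r ^ (α - 1) * r := by
      rw [show α = (α - 1) + 1 by ring, Real.rpow_add hr, Real.rpow_one]
      ring_nf
    calc (0:ℝ) < r ^ (α - 1) * (α * u (r • θ) + r * D) := mul_pos hP hsum
      _ = α * r ^ (α - 1) * u (r • θ) + r ^ α * D := by rw [hsplit]; ring
  refine ⟨r₀, hr₀pos, hr₀1, key, ?_⟩
  intro lam hlam hlamr y hyr₀ hyi hylt
  have hs : 0 < ‖y‖ := hlam.trans hylt
  set s : ℝ := ‖y‖ with hsdef
  set θ : E N := s⁻¹ • y with hθdef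
  have hθnorm : ‖θ‖ = 1 := by
    rw [hθdef, norm_smul, Real.norm_eq_abs, abs_of_pos (inv_pos.2 hs), ← hsdef,
      inv_mul_cancel₀ hs.ne']
  have hθi : 0 ≤ θ i := by
    have : θ i = s⁻¹ * y i := rfl
    rw [this]
    exact mul_nonneg (inv_pos.2 hs).le hyi
  set a : ℝ := lam ^ 2 / s with hadef
  have ha : 0 < a := by positivity
  have has : a < s := by
    rw [hadef, div_lt_iff₀ hs]
    nlinarith
  have hmono : StrictMonoOn (fun t : ℝ => t ^ α * u (t • θ)) (Set.Icc a s) := by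
    apply strictMonoOn_of_deriv_pos (convex_Icc a s)
    · apply ContinuousOn.mul
      · intro t ht
        exact (Real.continuousAt_rpow_const t α
          (Or.inl (lt_of_lt_of_le ha ht.1).ne')).continuousWithinAt
      · have hc2 : Continuous fun t : ℝ => t • θ := by
          exact continuous_id.smul continuous_const
        apply hreg'.continuousOn.comp hc2.continuousOn
        intro t ht
        constructor
        · rw [norm_smul, hθnorm, mul_one, Real.norm_eq_abs,
            abs_of_pos (lt_of_lt_of_le ha ht.1)]
          exact ht.2.trans (hyr₀.trans hr₀1)
        · show (0:ℝ) ≤ t * θ i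
          exact mul_nonneg (lt_of_lt_of_le ha ht.1).le hθi
    · intro t ht
      rw [interior_Icc] at ht
      exact key t (ha.trans ht.1) (ht.2.le.trans hyr₀) θ hθnorm hθi
  have hglt := hmono (Set.left_mem_Icc.2 has.le) (Set.right_mem_Icc.2 has.le) has
  simp only at hglt
  have hsy : s • θ = y := by
    rw [hθdef, smul_smul, mul_inv_cancel₀ hs.ne', one_smul]
  have hay : a • θ = (lam ^ 2 / ‖y‖ ^ 2) • y := by
    rw [hθdef, smul_smul, hadef, ← hsdef]
    congr 1
    field_simp
  rw [hsy, hay] at hglt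
  -- now hglt : a ^ α * u ((lam^2/‖y‖^2) • y) < s ^ α * u y
  set u1 : ℝ := u ((lam ^ 2 / ‖y‖ ^ 2) • y) with hu1def
  set u2 : ℝ := u y with hu2def
  have hP : 0 < s ^ α := Real.rpow_pos_of_pos hs α
  have h2 : s ^ α * (a ^ α * u1) < s ^ α * (s ^ α * u2) := (mul_lt_mul_iff_right₀ hP).2 hglt
  have hcast : ((N - 2 : ℕ) : ℝ) = (N : ℝ) - 2 := by
    have h2n : (2 : ℕ) ≤ N := by omega
    push_cast [Nat.cast_sub h2n]
    ring
  have hA : s ^ α * a ^ α = lam ^ (N - 2) := by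
    rw [← Real.mul_rpow hs.le ha.le]
    have hsa : s * a = lam ^ 2 := by
      rw [hadef]; field_simp
    rw [hsa, ← Real.rpow_natCast lam 2, ← Real.rpow_mul hlam.le,
      ← Real.rpow_natCast lam (N - 2), hcast]
    norm_num
    rw [hαdef]
    ring_nf
  have hB : s ^ α * s ^ α = s ^ (N - 2) := by
    rw [← Real.rpow_add hs, ← Real.rpow_natCast s (N - 2), hcast]
    congr 1
    rw [hαdef]; ring
  rw [← mul_assoc, ← mul_assoc, hA, hB] at h2
  rw [div_pow, div_mul_eq_mul_div, div_lt_iff₀ (pow_pos hs (N - 2))]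
  nlinarith [h2]
end
end

section
/- Let m ≥ 1 and let A = [a_{ij}] be an m × m real matrix with nonnegative entries which is irreducible (i.e., there is no partition of {1,…,m} into nonempty sets I₁, I₂ with a_{ij} = 0 for all i ∈ I₁ and j ∈ I₂). Suppose w₁, …, w_m are nonnegative continuous functions on a connected open set Σ ⊆ ℝ^N such that each w_i is superharmonic wherever some w_j with a_{ij} > 0 is positive, in the precise sense: −Δw_i = Σ_j φ_{ij}(u_j^{a_{ij}} − v_j^{a_{ij}}) with φ_{ij} > 0, w_j = u_j − v_j ≥ 0, u_j, v_j > 0. If some w_{i₀} ≡ 0 on Σ, then w_i ≡ 0 on Σ for all i. -/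
open Real Filter
open scoped BigOperators RealInnerProductSpace

noncomputable section

lemma lap_eq_zero_of_eqOn {N : ℕ} {f : E N → ℝ} {Ω : Set (E N)} (hopen : IsOpen Ω)
    (hf : ∀ y ∈ Ω, f y = 0) {y : E N} (hy : y ∈ Ω) : lap f y = 0 := by
  have hev : ∀ z ∈ Ω, f =ᶠ[nhds z] (fun _ => (0 : ℝ)) := fun z hz =>
    Filter.eventually_of_mem (hopen.mem_nhds hz) hf
  have hpd : ∀ i, ∀ z ∈ Ω, pd f i z = 0 := by
    intro i z hz
    unfold pd
    rw [(hev z hz).fderiv_eq, fderiv_fun_const]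
    simp
  unfold lap
  refine Finset.sum_eq_zero fun i _ => ?_
  show fderiv ℝ (pd f i) y (EuclideanSpace.single i 1) = 0
  have h2 : (pd f i) =ᶠ[nhds y] fun _ => (0 : ℝ) :=
    Filter.eventually_of_mem (hopen.mem_nhds hy) (hpd i)
  rw [h2.fderiv_eq, fderiv_fun_const]
  simp

/-- if `A` is irreducible with nonnegative entries and the nonnegative
differences `w_i = u_i - v_i` satisfy `-Δw_i = Σ_j φ_{ij}(u_j^{a_{ij}} - v_j^{a_{ij}})`
with `φ_{ij} > 0`, then vanishing of one `w_{i₀}` forces all `w_i` to vanish. -/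
theorem stmt4 (N m : ℕ) (hm : 1 ≤ m) (a : Fin m → Fin m → ℝ)
    (ha : ∀ i j, 0 ≤ a i j)
    (hirr : ¬ ∃ I₁ I₂ : Set (Fin m), I₁.Nonempty ∧ I₂.Nonempty ∧
      I₁ ∪ I₂ = Set.univ ∧ Disjoint I₁ I₂ ∧ ∀ i ∈ I₁, ∀ j ∈ I₂, a i j = 0)
    (Ω : Set (E N)) (hopen : IsOpen Ω) (hconn : IsConnected Ω)
    (u v : Fin m → E N → ℝ) (φ : Fin m → Fin m → E N → ℝ)
    (hu : ∀ i, ContDiffOn ℝ 2 (u i) Ω) (hv : ∀ i, ContDiffOn ℝ 2 (v i) Ω)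
    (hvpos : ∀ i, ∀ y ∈ Ω, 0 < v i y)
    (hle : ∀ i, ∀ y ∈ Ω, v i y ≤ u i y)
    (hφ : ∀ i j, ∀ y ∈ Ω, 0 < φ i j y)
    (hpde : ∀ i, ∀ y ∈ Ω, -(lap (fun z => u i z - v i z) y)
        = ∑ j, φ i j y * ((u j y) ^ (a i j) - (v j y) ^ (a i j)))
    (i₀ : Fin m) (h0 : ∀ y ∈ Ω, u i₀ y = v i₀ y) :
    ∀ i, ∀ y ∈ Ω, u i y = v i y := by
  by_contra hcon
  push_neg at hcon
  obtain ⟨i₁, y₁, hy₁, hne⟩ := hcon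
  apply hirr
  refine ⟨{i | ∀ y ∈ Ω, u i y = v i y}, {i | ∀ y ∈ Ω, u i y = v i y}ᶜ,
    ⟨i₀, h0⟩, ⟨i₁, fun h => hne (h y₁ hy₁)⟩, Set.union_compl_self _,
    disjoint_compl_right, ?_⟩
  intro i hi j hj
  by_contra haij
  have hapos : 0 < a i j := lt_of_le_of_ne (ha i j) (Ne.symm haij)
  simp only [Set.mem_compl_iff, Set.mem_setOf_eq, not_forall] at hj
  obtain ⟨y, hyΩ, hne'⟩ := hj
  have hlt : v j y < u j y := lt_of_le_of_ne (hle j y hyΩ) (fun h => hne' h.symm)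
  have hlap : lap (fun z => u i z - v i z) y = 0 :=
    lap_eq_zero_of_eqOn hopen (fun z hz => by simp [hi z hz]) hyΩ
  have hsum : ∑ k, φ i k y * ((u k y) ^ (a i k) - (v k y) ^ (a i k)) = 0 := by
    rw [← hpde i y hyΩ, hlap, neg_zero]
  have hnn : ∀ k ∈ Finset.univ, 0 ≤ φ i k y * ((u k y) ^ (a i k) - (v k y) ^ (a i k)) := by
    intro k _
    apply mul_nonneg (hφ i k y hyΩ).le
    have := Real.rpow_le_rpow (hvpos k y hyΩ).le (hle k y hyΩ) (ha i k)
    linarith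
  have hterm := (Finset.sum_eq_zero_iff_of_nonneg hnn).mp hsum j (Finset.mem_univ j)
  have hφpos := hφ i j y hyΩ
  have heq : (u j y) ^ (a i j) = (v j y) ^ (a i j) := by
    rcases mul_eq_zero.mp hterm with h | h
    · exact absurd h hφpos.ne'
    · linarith
  have : (v j y) ^ (a i j) < (u j y) ^ (a i j) :=
    Real.rpow_lt_rpow (hvpos j y hyΩ).le hlt hapos
  linarith
end
end

section
/- Let m ≥ 1, let a_{ij} ≥ 0 (1 ≤ i, j ≤ m), and let c₁, …, c_m be real numbers. There do not exist functions u₁, …, u_m ∈ C²([0,∞)) satisfying, for every i: (i) u_i''(t) = −∏_{j=1}^m u_j(t)^{a_{ij}} for t ∈ (0,∞); (ii) u_i'(0) = c_i ∏_{j=1}^m u_j(0)^{b_{ij}} for some reals b_{ij}; (iii) u_i(t) > 0 for all t ∈ [0,∞). More precisely, no positive C² functions u₁, …, u_m on [0,∞) can satisfy u_i'' = −∏_j u_j^{a_{ij}} on (0,∞) with each product ∏_j u_j^{a_{ij}} strictly positive. -/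
open Real Filter
open scoped BigOperators RealInnerProductSpace
open Set

noncomputable section

lemma decay_aux (f : ℝ → ℝ) (t₀ c : ℝ) (hf : ContinuousOn f (Ici t₀))
    (hd : ∀ t ∈ Ioi t₀, DifferentiableAt ℝ f t)
    (hle : ∀ t ∈ Ioi t₀, deriv f t ≤ -c) :
    ∀ t ∈ Ici t₀, f t ≤ f t₀ - c * (t - t₀) := by
  have hanti : AntitoneOn (fun t => f t + c * t) (Ici t₀) := by
    apply antitoneOn_of_deriv_nonpos (convex_Ici t₀)
    · exact hf.add (continuousOn_const.mul continuousOn_id)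
    · intro t ht
      rw [interior_Ici] at ht
      exact ((hd t ht).add ((differentiableAt_const c).mul differentiableAt_id)).differentiableWithinAt
    · intro t ht
      rw [interior_Ici] at ht
      have h : HasDerivAt (fun t => f t + c * t) (deriv f t + c) t := by
        exact (((hd t ht).hasDerivAt).add ((hasDerivAt_id t).const_mul c)).congr_deriv (by simp)
      rw [h.deriv]
      linarith [hle t ht]
  intro t ht
  have := hanti (self_mem_Ici) ht ht
  simp only at this
  linarith

/-- there are no positive `C²` functions `u₁, …, u_m` on `[0,∞)` with
`u_i'' = -∏_j u_j^{a_{ij}}` on `(0,∞)`, the products being strictly positive. -/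
theorem stmt5 (m : ℕ) (hm : 1 ≤ m) (a : Fin m → Fin m → ℝ) (ha : ∀ i j, 0 ≤ a i j) :
    ¬ ∃ u : Fin m → ℝ → ℝ,
      (∀ i, ContDiffOn ℝ 2 (u i) (Set.Ici (0 : ℝ))) ∧
      (∀ i, ∀ t : ℝ, 0 ≤ t → 0 < u i t) ∧
      (∀ i, ∀ t : ℝ, 0 < t → deriv (deriv (u i)) t = -∏ j, (u j t) ^ (a i j)) ∧
      (∀ i, ∀ t : ℝ, 0 ≤ t → 0 < ∏ j, (u j t) ^ (a i j)) := by
  rintro ⟨u, h1, h2, h3, h4⟩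
  -- C² on the open set (0,∞)
  have hC : ∀ i, ContDiffOn ℝ 2 (u i) (Ioi 0) := fun i => (h1 i).mono Ioi_subset_Ici_self
  -- u i differentiable at every t > 0
  have hdiff : ∀ i, ∀ t ∈ Ioi (0:ℝ), DifferentiableAt ℝ (u i) t := by
    intro i t ht
    exact (((hC i).differentiableOn (by norm_num)) t ht).differentiableAt (isOpen_Ioi.mem_nhds ht)
  -- deriv (u i) is C¹ on (0,∞)
  have hC1 : ∀ i, ContDiffOn ℝ 1 (deriv (u i)) (Ioi 0) := by
    intro i
    exact (hC i).deriv_of_isOpen isOpen_Ioi (by norm_num)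
  have hdiff2 : ∀ i, ∀ t ∈ Ioi (0:ℝ), DifferentiableAt ℝ (deriv (u i)) t := by
    intro i t ht
    exact (((hC1 i).differentiableOn (by norm_num)) t ht).differentiableAt (isOpen_Ioi.mem_nhds ht)
  -- deriv (u i) strictly decreasing on (0,∞)
  have hanti : ∀ i, StrictAntiOn (deriv (u i)) (Ioi 0) := by
    intro i
    apply strictAntiOn_of_deriv_neg (convex_Ioi 0) ((hC1 i).continuousOn)
    intro t ht
    rw [interior_Ioi] at ht
    rw [h3 i t ht]
    exact neg_neg_iff_pos.mpr (h4 i t ht.le)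
  -- Step 2: deriv (u i) ≥ 0 on (0,∞)
  have hpos' : ∀ i, ∀ t ∈ Ioi (0:ℝ), 0 ≤ deriv (u i) t := by
    intro i t₀ ht₀
    by_contra hneg
    push_neg at hneg
    set d := deriv (u i) t₀ with hd
    have hdlt : d < 0 := hneg
    have hkey := decay_aux (u i) t₀ (-d)
      (((h1 i).continuousOn).mono (Ici_subset_Ici.mpr ht₀.le))
      (fun t ht => hdiff i t (mem_Ioi.mpr (lt_trans ht₀ ht)))
      (fun t ht => by
        rw [neg_neg]
        exact (hanti i ht₀ (mem_Ioi.mpr (lt_trans ht₀ ht)) ht).le)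
    set T := t₀ + (u i t₀) / (-d) + 1 with hT
    have hTmem : T ∈ Ici t₀ := by
      have : 0 ≤ (u i t₀) / (-d) := div_nonneg (h2 i t₀ ht₀.le).le (by linarith)
      simp only [hT, mem_Ici]; linarith
    have := hkey T hTmem
    have hdne : d ≠ 0 := ne_of_lt hdlt
    have hTval : u i t₀ - (-d) * (T - t₀) = d := by
      rw [hT]
      field_simp [hdne]
      ring
    rw [hTval] at this
    have hTpos : 0 ≤ T := le_trans ht₀.le hTmem
    linarith [h2 i T hTpos]
  -- Step 3: u i monotone on (0,∞)
  have hmono : ∀ i, MonotoneOn (u i) (Ioi 0) := by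
    intro i
    apply monotoneOn_of_deriv_nonneg (convex_Ioi 0) (((hC i).continuousOn))
    · intro t ht
      rw [interior_Ioi] at ht
      exact (hdiff i t ht).differentiableWithinAt
    · intro t ht
      rw [interior_Ioi] at ht
      exact hpos' i t ht
  -- Step 4: fix i₀ and derive contradiction
  set i₀ : Fin m := ⟨0, hm⟩
  set δ := ∏ j, (u j 1) ^ (a i₀ j) with hδ
  have hδpos : 0 < δ := h4 i₀ 1 zero_le_one
  have hprodge : ∀ t ∈ Ioi (1:ℝ), δ ≤ ∏ j, (u j t) ^ (a i₀ j) := by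
    intro t ht
    apply Finset.prod_le_prod
    · intro j _
      exact Real.rpow_nonneg (h2 j 1 zero_le_one).le _
    · intro j _
      exact Real.rpow_le_rpow (h2 j 1 zero_le_one).le
        (hmono j (mem_Ioi.mpr one_pos) (mem_Ioi.mpr (lt_trans one_pos ht)) ht.le) (ha i₀ j)
  have hkey := decay_aux (deriv (u i₀)) 1 δ
    (((hC1 i₀).continuousOn).mono (fun x hx => mem_Ioi.mpr (lt_of_lt_of_le one_pos hx)))
    (fun t ht => hdiff2 i₀ t (mem_Ioi.mpr (lt_trans one_pos ht)))
    (fun t ht => by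
      rw [h3 i₀ t (lt_trans one_pos ht), neg_le_neg_iff]
      exact hprodge t ht)
  set D := deriv (u i₀) 1 with hD
  have hDpos : 0 ≤ D := hpos' i₀ 1 (mem_Ioi.mpr one_pos)
  set T := 1 + D / δ + 1 with hT
  have hTmem : T ∈ Ici (1:ℝ) := by
    have : 0 ≤ D / δ := div_nonneg hDpos hδpos.le
    simp only [hT, mem_Ici]; linarith
  have := hkey T hTmem
  have hδne : δ ≠ 0 := ne_of_gt hδpos
  have hTval : D - δ * (T - 1) = -δ := by
    rw [hT]
    field_simp [hδne]
    ring
  rw [hTval] at this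
  have : deriv (u i₀) T < 0 := by linarith
  linarith [hpos' i₀ T (mem_Ioi.mpr (lt_of_lt_of_le one_pos hTmem))]
end
end

section
/- Let N ≥ 1, b > 0, and let f ∈ C¹(ℝ^N). Suppose that for every x ∈ ℝ^N there exists λ(x) > 0 such that (λ(x)/|y − x|)^b · f(x + λ(x)²(y − x)/|y − x|²) = f(y) for all y ∈ ℝ^N \ {x}. Then there exist a ≥ 0, d > 0, x̄ ∈ ℝ^N and a sign ε ∈ {+1, −1} such that f(x) = ε (a/(d + |x̄ − x|²))^{b/2} for all x ∈ ℝ^N. -/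
open Real Filter
open scoped BigOperators RealInnerProductSpace

noncomputable section

open scoped Topology

section Aux

lemma qexp {N : ℕ} (x θ : E N) (hθ : ‖θ‖ = 1) (s : ℝ) :
    ‖θ - s • x‖ ^ 2 = 1 - 2*s*⟪x,θ⟫ + s^2*‖x‖^2 := by
  rw [← real_inner_self_eq_norm_sq]
  simp only [inner_sub_left, inner_sub_right, real_inner_smul_left, real_inner_smul_right,
    real_inner_self_eq_norm_sq, hθ, norm_smul, mul_pow, Real.norm_eq_abs, sq_abs]
  rw [real_inner_comm θ x]
  ring

lemma phiDeriv {N : ℕ} (b : ℝ) (f : E N → ℝ) (hf : ContDiff ℝ 1 f)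
    (x θ : E N) (lx : ℝ) :
    HasDerivAt (fun s : ℝ => lx ^ b * ((1 - 2*s*⟪x,θ⟫ + s^2*‖x‖^2) ^ (-(b/2)) *
        f (x + ((lx^2*s)/(1 - 2*s*⟪x,θ⟫ + s^2*‖x‖^2)) • (θ - s • x))))
      (lx ^ b * (b*⟪x,θ⟫*f x + lx^2 * fderiv ℝ f x θ)) 0 := by
  set c : ℝ := ⟪x,θ⟫ with hc
  have hq : HasDerivAt (fun s : ℝ => 1 - 2*s*c + s^2*‖x‖^2) (-(2*c)) 0 := by
    have h : (fun s : ℝ => 1 - 2*s*c + s^2*‖x‖^2)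
        = fun s : ℝ => (1 - (2*c)*s) + s^2*‖x‖^2 := by funext s; ring
    rw [h]
    have h1 : HasDerivAt (fun s : ℝ => 1 - (2*c)*s) (-(2*c)) 0 := by
      simpa using ((hasDerivAt_id (0:ℝ)).const_mul (2*c)).const_sub 1
    have h2 : HasDerivAt (fun s : ℝ => s^2*‖x‖^2) 0 0 := by
      simpa using (hasDerivAt_pow 2 (0:ℝ)).mul_const (‖x‖^2)
    simpa [Pi.add_def] using h1.add h2
  have hcnum : HasDerivAt (fun s : ℝ => lx^2*s) (lx^2) 0 := by
    simpa using (hasDerivAt_id (0:ℝ)).const_mul (lx^2)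
  have hdiv : HasDerivAt (fun s : ℝ => (lx^2*s)/(1 - 2*s*c + s^2*‖x‖^2)) (lx^2) 0 := by
    have := hcnum.div hq (by norm_num)
    simpa [Pi.div_def] using this
  have hv : HasDerivAt (fun s : ℝ => θ - s • x) (-((1:ℝ) • x)) 0 :=
    ((hasDerivAt_id (0:ℝ)).smul_const x).const_sub θ
  have hxi : HasDerivAt (fun s : ℝ => x + ((lx^2*s)/(1 - 2*s*c + s^2*‖x‖^2)) • (θ - s • x))
      (lx^2 • θ) 0 := by
    have := (hdiv.smul hv).const_add x
    simpa using this
  have h0 : (fun s : ℝ => x + ((lx^2*s)/(1 - 2*s*c + s^2*‖x‖^2)) • (θ - s • x)) 0 = x := by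
    norm_num
  have hfd : HasFDerivAt f (fderiv ℝ f x)
      ((fun s : ℝ => x + ((lx^2*s)/(1 - 2*s*c + s^2*‖x‖^2)) • (θ - s • x)) 0) := by
    rw [h0]; exact (hf.differentiable one_ne_zero x).hasFDerivAt
  have hcomp : HasDerivAt (fun s : ℝ =>
      f (x + ((lx^2*s)/(1 - 2*s*c + s^2*‖x‖^2)) • (θ - s • x)))
      (fderiv ℝ f x (lx^2 • θ)) 0 := by
    have := hfd.comp_hasDerivAt 0 hxi
    simpa [Function.comp_def] using this
  have hrpow : HasDerivAt (fun s : ℝ => (1 - 2*s*c + s^2*‖x‖^2) ^ (-(b/2)))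
      ((-(2*c)) * (-(b/2)) * 1 ^ (-(b/2) - 1)) 0 := by
    have := hq.rpow_const (p := -(b/2)) (Or.inl (by norm_num))
    simpa using this
  have hmul := (hrpow.mul hcomp).const_mul (lx ^ b)
  refine hmul.congr_deriv ?_
  simp only [mul_zero, zero_mul, zero_div, zero_smul, add_zero, sub_zero, zero_add,
    smul_zero, Real.one_rpow, map_smul, smul_eq_mul, ne_eq, OfNat.ofNat_ne_zero,
    not_false_eq_true, zero_pow, one_mul]
  ring

lemma keylim {N : ℕ} (b : ℝ) (hb : 0 < b) (f : E N → ℝ) (hf : ContDiff ℝ 1 f)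
    (x : E N) (lx : ℝ) (hlx : 0 < lx)
    (hx : ∀ y : E N, y ≠ x →
      (lx / ‖y - x‖) ^ b * f (x + (lx ^ 2 / ‖y - x‖ ^ 2) • (y - x)) = f y)
    (θ : E N) (hθ : ‖θ‖ = 1) :
    Tendsto (fun s : ℝ => (s⁻¹)^b * f (s⁻¹ • θ)) (𝓝[>] 0) (𝓝 (lx ^ b * f x)) ∧
    Tendsto (fun s : ℝ => ((s⁻¹)^b * f (s⁻¹ • θ) - lx ^ b * f x)/s) (𝓝[>] 0)
      (𝓝 (lx ^ b * (b*⟪x,θ⟫*f x + lx^2 * fderiv ℝ f x θ))) := by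
  set Φ : ℝ → ℝ := fun s : ℝ => lx ^ b * ((1 - 2*s*⟪x,θ⟫ + s^2*‖x‖^2) ^ (-(b/2)) *
        f (x + ((lx^2*s)/(1 - 2*s*⟪x,θ⟫ + s^2*‖x‖^2)) • (θ - s • x))) with hΦdef
  have hΦ := phiDeriv b f hf x θ lx
  have hΦ0 : Φ 0 = lx ^ b * f x := by
    simp [hΦdef, Real.one_rpow]
  -- eventual equality
  have hev : ∀ᶠ s in 𝓝[>] (0:ℝ), Φ s = (s⁻¹)^b * f (s⁻¹ • θ) := by
    have hmem : Set.Ioo (0:ℝ) (‖x‖+1)⁻¹ ∈ 𝓝[>] (0:ℝ) :=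
      Ioo_mem_nhdsGT_of_mem ⟨le_refl 0, by positivity⟩
    filter_upwards [hmem] with s hs
    obtain ⟨hs0, hs1⟩ := hs
    have hsne : s ≠ 0 := ne_of_gt hs0
    have hxs : s * (‖x‖ + 1) < 1 := by
      rw [← inv_inv (‖x‖+1)]
      rw [mul_comm]
      have h1 : (0:ℝ) < (‖x‖+1)⁻¹ := by positivity
      calc (‖x‖+1)⁻¹⁻¹ * s < (‖x‖+1)⁻¹⁻¹ * (‖x‖+1)⁻¹ := by
            apply mul_lt_mul_of_pos_left hs1 (by positivity)
        _ = 1 := by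
            rw [inv_inv]
            field_simp
    have hsx : s * ‖x‖ < 1 := by nlinarith [norm_nonneg x]
    set n : ℝ := ‖θ - s • x‖ with hn
    have hnpos : 0 < n := by
      have h1 : ‖θ‖ - ‖s • x‖ ≤ n := norm_sub_norm_le θ (s • x)
      have h2 : ‖s • x‖ = s * ‖x‖ := by
        rw [norm_smul, Real.norm_eq_abs, abs_of_pos hs0]
      rw [hθ, h2] at h1
      linarith
    set Q : ℝ := 1 - 2*s*⟪x,θ⟫ + s^2*‖x‖^2 with hQ
    have hQn : Q = n ^ 2 := (qexp x θ hθ s).symm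
    have hQpos : 0 < Q := hQn ▸ pow_pos hnpos 2
    set y : E N := s⁻¹ • θ with hy
    have hyx : y ≠ x := by
      intro h
      have h1 : ‖y‖ = s⁻¹ := by
        rw [hy, norm_smul, Real.norm_eq_abs, abs_of_pos (by positivity), hθ, mul_one]
      have h2 : s⁻¹ ≤ ‖x‖ := by rw [← h1, h]
      have h3 : ‖x‖ + 1 < s⁻¹ := by
        rw [← inv_inv (‖x‖+1)]
        exact (inv_lt_inv₀ (by positivity) hs0).mpr hs1
      linarith
    have hyxeq : y - x = s⁻¹ • (θ - s • x) := by
      rw [smul_sub, smul_smul, inv_mul_cancel₀ hsne, one_smul]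
    have hnormyx : ‖y - x‖ = s⁻¹ * n := by
      rw [hyxeq, norm_smul, Real.norm_eq_abs, abs_of_pos (by positivity)]
    have hnormyx2 : ‖y - x‖ ^ 2 = s⁻¹^2 * Q := by
      rw [hnormyx, mul_pow, hQn]
    -- the inversion point
    have hxi : x + (lx ^ 2 / ‖y - x‖ ^ 2) • (y - x)
        = x + ((lx^2*s)/Q) • (θ - s • x) := by
      rw [hnormyx2, hyxeq, smul_smul]
      congr 2
      field_simp
    -- the prefactor
    have hpow : (lx / ‖y - x‖) ^ b = lx^b * (s^b * Q^(-(b/2))) := by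
      have h1 : lx / ‖y - x‖ = lx * (s / n) := by
        rw [hnormyx]
        field_simp
      have hQrpow : Q ^ (-(b/2)) = (n ^ b)⁻¹ := by
        rw [hQn, ← Real.rpow_natCast n 2, ← Real.rpow_mul hnpos.le]
        rw [← Real.rpow_neg hnpos.le]
        congr 1
        ring
      rw [h1, Real.mul_rpow hlx.le (by positivity), Real.div_rpow hs0.le hnpos.le, hQrpow]
      ring
    have hid := hx y hyx
    rw [hxi, hpow] at hid
    have hsb : (0:ℝ) < s ^ b := Real.rpow_pos_of_pos hs0 b
    have hsinv : (s⁻¹)^b = (s^b)⁻¹ := Real.inv_rpow hs0.le b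
    rw [hΦdef]
    simp only
    rw [← hQ]
    rw [← hid, hsinv]
    field_simp
  have hΦcont : Tendsto Φ (𝓝[>] (0:ℝ)) (𝓝 (lx ^ b * f x)) := by
    rw [← hΦ0]
    exact (hΦ.continuousAt.tendsto).mono_left nhdsWithin_le_nhds
  constructor
  · exact hΦcont.congr' hev
  · have hmono : 𝓝[>] (0:ℝ) ≤ 𝓝[≠] (0:ℝ) :=
      nhdsWithin_mono 0 (fun s hs => ne_of_gt hs)
    have hslope := (hasDerivAt_iff_tendsto_slope.mp hΦ).mono_left hmono
    refine hslope.congr' ?_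
    filter_upwards [hev] with s hseq
    show slope Φ 0 s = _
    rw [slope_def_field, hseq, hΦ0, sub_zero]

variable {N : ℕ} (hN : 1 ≤ N) (b : ℝ) (hb : 0 < b) (f : E N → ℝ) (hf : ContDiff ℝ 1 f)
  (lam : E N → ℝ)
  (hlam : ∀ x : E N, 0 < lam x ∧ ∀ y : E N, y ≠ x →
      (lam x / ‖y - x‖) ^ b * f (x + (lam x ^ 2 / ‖y - x‖ ^ 2) • (y - x)) = f y)

include hN hb hf hlam in
lemma constA : ∀ x : E N, lam x ^ b * f x = lam 0 ^ b * f 0 := by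
  intro x
  set θ : E N := EuclideanSpace.single (⟨0, hN⟩ : Fin N) (1:ℝ) with hθdef
  have hθ : ‖θ‖ = 1 := by rw [hθdef, EuclideanSpace.norm_single]; norm_num
  exact tendsto_nhds_unique
    ((keylim b hb f hf x (lam x) (hlam x).1 (hlam x).2 θ hθ).1)
    ((keylim b hb f hf 0 (lam 0) (hlam 0).1 (hlam 0).2 θ hθ).1)

include hN hb hf hlam in
lemma gradrel : ∀ (x θ : E N),
    b * (lam 0 ^ b * f 0) * ⟪x,θ⟫ + (lam x ^ b * lam x ^ 2) * fderiv ℝ f x θ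
      = (lam 0 ^ b * lam 0 ^ 2) * fderiv ℝ f 0 θ := by
  have hA := constA hN b hb f hf lam hlam
  have hunit : ∀ (x θ : E N), ‖θ‖ = 1 →
      b * (lam 0 ^ b * f 0) * ⟪x,θ⟫ + (lam x ^ b * lam x ^ 2) * fderiv ℝ f x θ
        = (lam 0 ^ b * lam 0 ^ 2) * fderiv ℝ f 0 θ := by
    intro x θ hθ
    have h1 := (keylim b hb f hf x (lam x) (hlam x).1 (hlam x).2 θ hθ).2
    have h2 := (keylim b hb f hf 0 (lam 0) (hlam 0).1 (hlam 0).2 θ hθ).2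
    rw [hA x] at h1
    have := tendsto_nhds_unique h1 h2
    have hz : ⟪(0:E N),θ⟫ = (0:ℝ) := inner_zero_left θ
    rw [hz] at this
    have hAx := hA x
    linear_combination this - b * ⟪x,θ⟫ * hAx
  intro x θ
  rcases eq_or_ne θ 0 with h | h
  · simp [h]
  · have hθn : (0:ℝ) < ‖θ‖ := norm_pos_iff.mpr h
    have hu : ‖(‖θ‖⁻¹ • θ : E N)‖ = 1 := norm_smul_inv_norm h
    have hthis := hunit x (‖θ‖⁻¹ • θ) hu
    have hi : ⟪x,θ⟫ = ‖θ‖ * ⟪x, ‖θ‖⁻¹ • θ⟫ := by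
      rw [real_inner_smul_right]; field_simp
    have hdx : fderiv ℝ f x θ = ‖θ‖ * fderiv ℝ f x (‖θ‖⁻¹ • θ) := by
      rw [map_smul, smul_eq_mul]; field_simp
    have hd0 : fderiv ℝ f 0 θ = ‖θ‖ * fderiv ℝ f 0 (‖θ‖⁻¹ • θ) := by
      rw [map_smul, smul_eq_mul]; field_simp
    rw [hi, hdx, hd0]
    linear_combination ‖θ‖ * hthis

include hN hb hf hlam in
lemma keyPos (hA : 0 < lam 0 ^ b * f 0) :
    ∃ a : ℝ, 0 ≤ a ∧ ∃ d : ℝ, 0 < d ∧ ∃ xb : E N,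
      ∀ x : E N, f x = (a / (d + ‖xb - x‖ ^ 2)) ^ (b / 2) := by
  have hbne : b ≠ 0 := ne_of_gt hb
  set A : ℝ := lam 0 ^ b * f 0 with hAdef
  have hAx : ∀ x, lam x ^ b * f x = A := constA hN b hb f hf lam hlam
  have hgrad := gradrel hN b hb f hf lam hlam
  have hlpos : ∀ x : E N, (0:ℝ) < lam x ^ b := fun x => Real.rpow_pos_of_pos (hlam x).1 b
  have hfx : ∀ x : E N, f x = A / lam x ^ b := by
    intro x
    rw [eq_div_iff (hlpos x).ne']
    rw [mul_comm]
    exact hAx x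
  have hfpos : ∀ x : E N, 0 < f x := by
    intro x
    rw [hfx x]
    exact div_pos hA (hlpos x)
  set D0 : E N →L[ℝ] ℝ := fderiv ℝ f 0 with hD0
  set c : ℝ := 2/(b*A) * (lam 0 ^ b * lam 0 ^ 2) with hcdef
  have hbA : b * A ≠ 0 := ne_of_gt (mul_pos hb hA)
  have hc' : (b*A) * c = 2 * (lam 0 ^ b * lam 0 ^ 2) := by
    rw [hcdef]; field_simp
  have hb2 : b * (2/b) = 2 := by field_simp
  -- key scalar identity
  have hK' : ∀ x : E N, (b*A) * (A ^ (2/b) * ((-(2/b)) * (f x) ^ (-(2/b)-1)))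
      = -2 * (lam x ^ b * lam x ^ 2) := by
    intro x
    have hlx := (hlam x).1
    have hl2 : (lam x ^ 2 : ℝ) = (lam x ^ b) ^ (2/b) := by
      rw [← Real.rpow_natCast (lam x) 2, ← Real.rpow_mul hlx.le]
      congr 1
      push_cast
      field_simp
    have e4 : (f x) ^ (-(2/b)-1) = A ^ (-(2/b)-1) * (lam x ^ 2 * lam x ^ b) := by
      rw [hfx x, Real.div_rpow hA.le (hlpos x).le]
      rw [show (-(2/b)-1 : ℝ) = -((2/b)+1) by ring, Real.rpow_neg (hlpos x).le,
        Real.rpow_add (hlpos x), Real.rpow_one]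
      rw [div_eq_mul_inv, inv_inv, ← hl2]
    have e2 : A ^ (2/b) * A ^ (-(2/b)-1) * A = 1 := by
      nth_rewrite 3 [← Real.rpow_one A]
      rw [← Real.rpow_add hA, ← Real.rpow_add hA]
      rw [show (2/b + (-(2/b)-1) + 1 : ℝ) = 0 by ring, Real.rpow_zero]
    rw [e4]
    linear_combination (-(A^(2/b)*A^(-(2/b)-1)*A)*(lam x^2*lam x^b)) * hb2
      + (-2*(lam x^2*lam x^b)) * e2
  -- derivative of w
  have hw : ∀ x : E N, HasFDerivAt (fun z => A ^ (2/b) * (f z) ^ (-(2/b)))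
      ((2:ℝ) • (innerSL ℝ x) - c • D0) x := by
    intro x
    have hfd : HasFDerivAt f (fderiv ℝ f x) x := (hf.differentiable one_ne_zero x).hasFDerivAt
    have hr : HasDerivAt (fun t : ℝ => t ^ (-(2/b))) ((-(2/b)) * (f x) ^ (-(2/b) - 1)) (f x) :=
      Real.hasDerivAt_rpow_const (Or.inl (hfpos x).ne')
    have hcomp := hr.comp_hasFDerivAt x hfd
    have hconst := hcomp.const_mul (A ^ (2/b))
    have hCLM : ((2:ℝ) • (innerSL ℝ x) - c • D0 : E N →L[ℝ] ℝ)
        = A ^ (2/b) • ((-(2/b)) * (f x) ^ (-(2/b)-1)) • fderiv ℝ f x := by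
      ext θ
      simp only [ContinuousLinearMap.sub_apply, ContinuousLinearMap.smul_apply,
        innerSL_apply_apply, smul_eq_mul]
      apply mul_left_cancel₀ hbA
      have hg := hgrad x θ
      have hk := hK' x
      linear_combination 2 * hg - (fderiv ℝ f x θ) * hk - (D0 θ) * hc'
    rw [hCLM]
    simpa [Function.comp] using hconst
  -- F has zero derivative
  set F : E N → ℝ := fun z => A ^ (2/b) * (f z) ^ (-(2/b)) - ‖z‖^2 + c * D0 z with hFdef
  have hF : ∀ x : E N, HasFDerivAt F (0 : E N →L[ℝ] ℝ) x := by
    intro x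
    have h2 := (hasStrictFDerivAt_norm_sq (x : E N)).hasFDerivAt
    have h3 : HasFDerivAt (fun z : E N => c * D0 z) (c • D0) x :=
      (c • D0).hasFDerivAt
    have h4 := ((hw x).sub h2).add h3
    refine h4.congr_fderiv ?_
    module
  have hFc : ∀ x : E N, F x = F 0 :=
    fun x => is_const_of_fderiv_eq_zero (fun z => (hF z).differentiableAt)
      (fun z => (hF z).fderiv) x 0
  have hF0 : F 0 = A ^ (2/b) * (f 0) ^ (-(2/b)) := by
    simp [hFdef]
  set γ : ℝ := A ^ (2/b) * (f 0) ^ (-(2/b)) with hγdef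
  have hquad : ∀ x : E N, A ^ (2/b) * (f x) ^ (-(2/b)) = ‖x‖^2 - c * D0 x + γ := by
    intro x
    have := hFc x
    rw [hF0] at this
    rw [hFdef] at this
    simp only at this
    linarith [this]
  -- Riesz representative
  set v : E N := (InnerProductSpace.toDual ℝ (E N)).symm D0 with hvdef
  have hv : ∀ z : E N, ⟪v, z⟫ = D0 z := fun z => InnerProductSpace.toDual_symm_apply
  set xb : E N := (c/2 : ℝ) • v with hxbdef
  have hxb : ∀ z : E N, 2 * ⟪xb, z⟫ = c * D0 z := by
    intro z
    rw [hxbdef, real_inner_smul_left, hv]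
    ring
  set d : ℝ := γ - ‖xb‖^2 with hddef
  have hwq : ∀ x : E N, A ^ (2/b) * (f x) ^ (-(2/b)) = d + ‖xb - x‖^2 := by
    intro x
    rw [hquad x, hddef, norm_sub_sq_real]
    have := hxb x
    linarith [this]
  have hdpos : 0 < d := by
    have := hwq xb
    simp only [sub_self, norm_zero] at this
    have hpos : 0 < A ^ (2/b) * (f xb) ^ (-(2/b)) :=
      mul_pos (Real.rpow_pos_of_pos hA _) (Real.rpow_pos_of_pos (hfpos xb) _)
    rw [this] at hpos
    simpa using hpos
  refine ⟨A ^ (2/b), (Real.rpow_pos_of_pos hA _).le, d, hdpos, xb, ?_⟩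
  intro x
  have h1 : d + ‖xb - x‖^2 = A ^ (2/b) * (f x) ^ (-(2/b)) := (hwq x).symm
  rw [h1]
  have hfxpos := hfpos x
  have h2 : A ^ (2/b) / (A ^ (2/b) * (f x) ^ (-(2/b))) = (f x) ^ (2/b) := by
    rw [Real.rpow_neg hfxpos.le]
    rw [div_eq_iff (by positivity)]
    field_simp
  rw [h2, ← Real.rpow_mul hfxpos.le]
  rw [show ((2/b)*(b/2) : ℝ) = 1 by field_simp, Real.rpow_one]

end Aux

/-- the moving-spheres calculus lemma: if `f ∈ C¹(ℝ^N)` is, for every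
center `x`, invariant under some Kelvin inversion with exponent `b`, then
`f(x) = ±(a/(d + |x̄ - x|²))^{b/2}`. -/
theorem stmt7 (N : ℕ) (hN : 1 ≤ N) (b : ℝ) (hb : 0 < b) (f : E N → ℝ)
    (hf : ContDiff ℝ 1 f)
    (hinv : ∀ x : E N, ∃ lam : ℝ, 0 < lam ∧ ∀ y : E N, y ≠ x →
      (lam / ‖y - x‖) ^ b * f (x + (lam ^ 2 / ‖y - x‖ ^ 2) • (y - x)) = f y) :
    ∃ a : ℝ, 0 ≤ a ∧ ∃ d : ℝ, 0 < d ∧ ∃ xb : E N, ∃ ε : ℝ, (ε = 1 ∨ ε = -1) ∧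
      ∀ x : E N, f x = ε * (a / (d + ‖xb - x‖ ^ 2)) ^ (b / 2) := by
  classical
  set lam : E N → ℝ := fun x => (hinv x).choose with hlamdef
  have hlam : ∀ x : E N, 0 < lam x ∧ ∀ y : E N, y ≠ x →
      (lam x / ‖y - x‖) ^ b * f (x + (lam x ^ 2 / ‖y - x‖ ^ 2) • (y - x)) = f y :=
    fun x => (hinv x).choose_spec
  rcases lt_trichotomy (lam 0 ^ b * f 0) 0 with hA | hA | hA
  · -- negative case: apply keyPos to -f
    set g : E N → ℝ := fun x => -f x with hgdef
    have hg : ContDiff ℝ 1 g := hf.neg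
    have hlamg : ∀ x : E N, 0 < lam x ∧ ∀ y : E N, y ≠ x →
        (lam x / ‖y - x‖) ^ b * g (x + (lam x ^ 2 / ‖y - x‖ ^ 2) • (y - x)) = g y := by
      intro x
      refine ⟨(hlam x).1, fun y hy => ?_⟩
      have := (hlam x).2 y hy
      simp only [hgdef]
      linear_combination -this
    have hAg : 0 < lam 0 ^ b * g 0 := by
      have : lam 0 ^ b * g 0 = -(lam 0 ^ b * f 0) := by simp [hgdef]
      rw [this]
      linarith
    obtain ⟨a, ha, d, hd, xb, hfe⟩ := keyPos hN b hb g hg lam hlamg hAg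
    refine ⟨a, ha, d, hd, xb, -1, Or.inr rfl, fun x => ?_⟩
    have := hfe x
    simp only [hgdef] at this
    linarith [this]
  · -- zero case: f ≡ 0
    have hAx := constA hN b hb f hf lam hlam
    refine ⟨0, le_refl 0, 1, one_pos, 0, 1, Or.inl rfl, fun x => ?_⟩
    have h1 : lam x ^ b * f x = 0 := by rw [hAx x, hA]
    have h2 : f x = 0 := by
      rcases mul_eq_zero.mp h1 with h | h
      · exact absurd h (Real.rpow_pos_of_pos (hlam x).1 b).ne'
      · exact h
    rw [h2, zero_div, Real.zero_rpow (by positivity), mul_zero]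
  · obtain ⟨a, ha, d, hd, xb, hfe⟩ := keyPos hN b hb f hf lam hlam hA
    exact ⟨a, ha, d, hd, xb, 1, Or.inl rfl, fun x => by rw [one_mul]; exact hfe x⟩
end
end
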